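/- For invertible density matrices P, Q and s ≥ 0, Tr(P^{1/2} (Δ_{Q,P}−I)(Δ_{Q,P}+sI)^{-1}(Δ_{Q,P}−I)(P^{1/2})) = Tr((Q−P) (L_Q + s R_P)^{-1}(Q−P)). -/

import Mathlib

open Matrix
open scoped ComplexOrder

private lemma trace_ct_mul_self_nonneg {n : ℕ} (M : Matrix (Fin n) (Fin n) ℂ) :
    0 ≤ (Mᴴ * M).trace := by
  rw [Matrix.trace]
  refine Finset.sum_nonneg fun i _ => ?_
  rw [Matrix.diag_apply, Matrix.mul_apply]
  exact Finset.sum_nonneg fun j _ => by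
    simpa [Matrix.conjTranspose_apply] using star_mul_self_nonneg (M j i)

private lemma eq_zero_of_trace_ct_mul_self {n : ℕ} {M : Matrix (Fin n) (Fin n) ℂ}
    (h : (Mᴴ * M).trace = 0) : M = 0 := by
  rw [Matrix.trace] at h
  have hdiag : ∀ i ∈ Finset.univ, (Mᴴ * M).diag i = 0 := by
    rw [Finset.sum_eq_zero_iff_of_nonneg] at h
    · exact h
    · intro i _
      rw [Matrix.diag_apply, Matrix.mul_apply]
      exact Finset.sum_nonneg fun j _ => by
        simpa [Matrix.conjTranspose_apply] using star_mul_self_nonneg (M j i)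
  ext j i
  have := hdiag i (Finset.mem_univ i)
  rw [Matrix.diag_apply, Matrix.mul_apply] at this
  rw [Finset.sum_eq_zero_iff_of_nonneg (fun j _ => by
    simpa [Matrix.conjTranspose_apply] using star_mul_self_nonneg (M j i))] at this
  have hj := this j (Finset.mem_univ j)
  rw [Matrix.conjTranspose_apply] at hj
  have : M j i = 0 := by
    rcases mul_eq_zero.mp hj with h' | h'
    · simpa using congrArg star h'
    · exact h'
  simpa using this

/-- For invertible density matrices `P, Q`, `R = P^{1/2}`, and `s ≥ 0`:
`Tr (P^{1/2} * (Δ−I)(Δ+s)⁻¹(Δ−I)(P^{1/2})) = Tr ((Q−P) * (L_Q + s R_P)⁻¹(Q−P))`,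
where `Δ = Δ_{Q,P}`, `C = (Δ+s)⁻¹((Δ−I)(P^{1/2}))` and
`B = (L_Q + s R_P)⁻¹(Q−P)` are encoded by the corresponding linear equations. -/
theorem relative_entropy_integrand_identity {n : ℕ}
    (P Q R B C : Matrix (Fin n) (Fin n) ℂ) (s : ℝ) (hs : 0 ≤ s)
    (hP : P.PosDef) (hQ : Q.PosDef)
    (hPtr : P.trace = 1) (hQtr : Q.trace = 1)
    (hR : R.PosDef) (hR2 : R * R = P)
    (hC : Q * C * P⁻¹ + (s : ℂ) • C = Q * R * P⁻¹ - R)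
    (hB : Q * B + (s : ℂ) • (B * P) = Q - P) :
    (R * (Q * C * P⁻¹ - C)).trace = ((Q - P) * B).trace := by
  have hPd : IsUnit P.det := (Matrix.isUnit_iff_isUnit_det P).mp hP.isUnit
  have hQd : IsUnit Q.det := (Matrix.isUnit_iff_isUnit_det Q).mp hQ.isUnit
  have hRd : IsUnit R.det := (Matrix.isUnit_iff_isUnit_det R).mp hR.isUnit
  have hPP : P * P⁻¹ = 1 := Matrix.mul_nonsing_inv P hPd
  have hPP' : P⁻¹ * P = 1 := Matrix.nonsing_inv_mul P hPd
  have hRR : R * R⁻¹ = 1 := Matrix.mul_nonsing_inv R hRd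
  have hRR' : R⁻¹ * R = 1 := Matrix.nonsing_inv_mul R hRd
  have hRH : Rᴴ = R := hR.1
  -- R commutes with P
  have hRP : R * P = P * R := by rw [← hR2, ← mul_assoc]
  -- P⁻¹ * R * P = R
  have hPinvRP : P⁻¹ * R * P = R := by
    rw [mul_assoc, hRP, ← mul_assoc, hPP', one_mul]
  -- R * P⁻¹ * R = 1
  have hRPinvR : R * P⁻¹ * R = 1 := by
    rw [← hR2, Matrix.mul_inv_rev, ← mul_assoc, hRR, one_mul, hRR']
  set X : Matrix (Fin n) (Fin n) ℂ := C * P⁻¹ * R with hXdef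
  -- X satisfies the same equation as B
  have hX : Q * X + (s : ℂ) • (X * P) = Q - P := by
    have hXP : X * P = C * R := by
      rw [hXdef, mul_assoc, mul_assoc, ← mul_assoc P⁻¹, hPinvRP]
    have hQX : Q * X = Q * C * P⁻¹ * R := by
      rw [hXdef]; noncomm_ring
    rw [hQX, hXP, ← Matrix.smul_mul, ← Matrix.add_mul, hC, Matrix.sub_mul,
      mul_assoc, mul_assoc, ← mul_assoc R P⁻¹, hRPinvR, mul_one, hR2]
  -- D := B - X satisfies the homogeneous equation
  set D : Matrix (Fin n) (Fin n) ℂ := B - X with hDdef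
  have hD : Q * D + (s : ℂ) • (D * P) = 0 := by
    have : Q * D + (s : ℂ) • (D * P)
        = (Q * B + (s : ℂ) • (B * P)) - (Q * X + (s : ℂ) • (X * P)) := by
      rw [hDdef, mul_sub, Matrix.sub_mul, smul_sub]; abel
    rw [this, hB, hX, sub_self]
  -- trace positivity argument: D = 0
  have hDzero : D = 0 := by
    have htr : (Dᴴ * Q * D).trace + (s : ℂ) * (Dᴴ * (D * P)).trace = 0 := by
      have := congrArg (fun M => (Dᴴ * M).trace) hD
      simpa [mul_add, Matrix.mul_smul, Matrix.trace_add, Matrix.trace_smul, mul_assoc,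
        smul_eq_mul] using this
    open scoped MatrixOrder Matrix.Norms.L2Operator in
    obtain ⟨S, hSH, hSS⟩ : ∃ S : Matrix (Fin n) (Fin n) ℂ, Sᴴ = S ∧ S * S = Q :=
      ⟨CFC.sqrt Q, (CFC.sqrt_nonneg Q).posSemidef.1, CFC.sqrt_mul_sqrt_self Q hQ.posSemidef.nonneg⟩
    have h1 : ((S * D)ᴴ * (S * D)).trace = (Dᴴ * Q * D).trace := by
      rw [Matrix.conjTranspose_mul, hSH, mul_assoc, ← mul_assoc S, hSS, ← mul_assoc]
    have h2 : ((D * R)ᴴ * (D * R)).trace = (Dᴴ * (D * P)).trace := by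
      rw [Matrix.conjTranspose_mul, hRH, mul_assoc, Matrix.trace_mul_comm R,
        mul_assoc Dᴴ (D * R) R, mul_assoc D R R, hR2]
    have ht1 : (0:ℂ) ≤ (Dᴴ * Q * D).trace := h1 ▸ trace_ct_mul_self_nonneg (S * D)
    have ht2 : (0:ℂ) ≤ (Dᴴ * (D * P)).trace := h2 ▸ trace_ct_mul_self_nonneg (D * R)
    have hsC : (0:ℂ) ≤ (s:ℂ) := by
      rw [Complex.zero_le_real]; exact hs
    have ht2' : (0:ℂ) ≤ (s:ℂ) * (Dᴴ * (D * P)).trace := mul_nonneg hsC ht2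
    have ht1zero : (Dᴴ * Q * D).trace = 0 := by
      have hle : (Dᴴ * Q * D).trace ≤ 0 := by
        have : (Dᴴ * Q * D).trace = -((s:ℂ) * (Dᴴ * (D * P)).trace) := by
          linear_combination htr
        rw [this]
        exact neg_nonpos.mpr ht2'
      exact le_antisymm hle ht1
    have hSD : S * D = 0 := by
      apply eq_zero_of_trace_ct_mul_self
      rw [h1, ht1zero]
    have hQD : Q * D = 0 := by
      rw [← hSS, mul_assoc, hSD, mul_zero]
    calc D = Q⁻¹ * (Q * D) := by rw [← mul_assoc, Matrix.nonsing_inv_mul Q hQd, one_mul]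
      _ = 0 := by rw [hQD, mul_zero]
  have hBX : B = X := by
    have := sub_eq_zero.mp hDzero
    exact this
  -- final trace computation
  rw [hBX, hXdef]
  rw [mul_sub, Matrix.trace_sub, Matrix.sub_mul, Matrix.trace_sub]
  congr 1
  · rw [Matrix.trace_mul_comm, ← mul_assoc, ← mul_assoc]
  · rw [Matrix.trace_mul_comm P, mul_assoc, mul_assoc, ← mul_assoc P⁻¹, hPinvRP,
      Matrix.trace_mul_comm]
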